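/- For a probability distribution p on ℕ with mean 1, the Gini index G[p] = (1/2)·∑ᵢ∑ⱼ |i−j|·pᵢ·pⱼ satisfies G[p] ≤ 3·p₀ − 2·p₀² ≤ 3·p₀. -/
import Mathlib


/-- For a probability distribution on ℕ with mean 1, the Gini index
`G[p] = (1/2)·∑ᵢ∑ⱼ |i−j|·pᵢ·pⱼ` satisfies `G[p] ≤ 3 p₀ − 2 p₀² ≤ 3 p₀`. -/
theorem stmt_2 (p : ℕ → ℝ) (hpos : ∀ n, 0 ≤ p n)
    (hsum : Summable p) (hmom : Summable (fun n : ℕ => (n : ℝ) * p n))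
    (h1 : ∑' n, p n = 1) (h2 : ∑' n : ℕ, (n : ℝ) * p n = 1)
    (hG : Summable (fun ij : ℕ × ℕ => |(ij.1 : ℝ) - (ij.2 : ℝ)| * p ij.1 * p ij.2)) :
    (1 / 2) * ∑' i : ℕ, ∑' j : ℕ, |(i : ℝ) - (j : ℝ)| * p i * p j
      ≤ 3 * p 0 - 2 * (p 0) ^ 2 ∧ 3 * p 0 - 2 * (p 0) ^ 2 ≤ 3 * p 0 := by
  have hp0 : p 0 ≤ 1 := h1 ▸ Summable.le_tsum hsum 0 (fun n _ => hpos n)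
  set f : ℕ → ℝ := fun n => p n - if n = 0 then p 0 else 0 with hf
  have hite : Summable (fun n : ℕ => if n = 0 then p 0 else 0) :=
    (hasSum_ite_eq 0 (p 0)).summable
  have hfnonneg : ∀ n, 0 ≤ f n := by
    intro n; by_cases h : n = 0 <;> simp [hf, h, hpos n]
  have hfsum : Summable f := hsum.sub hite
  have hftsum : ∑' n, f n = 1 - p 0 := by
    rw [Summable.tsum_sub hsum hite, h1, tsum_ite_eq]
  have hmom' : ∀ n : ℕ, 0 ≤ (n : ℝ) * p n := fun n => mul_nonneg (Nat.cast_nonneg n) (hpos n)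
  have s1 : Summable (fun ij : ℕ × ℕ => ((ij.1 : ℝ) * p ij.1) * p ij.2) :=
    hmom.mul_of_nonneg hsum hmom' hpos
  have s2 : Summable (fun ij : ℕ × ℕ => p ij.1 * ((ij.2 : ℝ) * p ij.2)) :=
    hsum.mul_of_nonneg hmom hpos hmom'
  have s3 : Summable (fun ij : ℕ × ℕ => f ij.1 * f ij.2) :=
    hfsum.mul_of_nonneg hfsum hfnonneg hfnonneg
  set b : ℕ × ℕ → ℝ := fun ij =>
    ((ij.1 : ℝ) * p ij.1) * p ij.2 + p ij.1 * ((ij.2 : ℝ) * p ij.2) - 2 * (f ij.1 * f ij.2)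
    with hb
  have sb : Summable b := (s1.add s2).sub (s3.mul_left 2)
  have tb : ∑' ij, b ij = 4 * p 0 - 2 * (p 0) ^ 2 := by
    rw [hb, Summable.tsum_sub (s1.add s2) (s3.mul_left 2), Summable.tsum_add s1 s2, tsum_mul_left,
      ← Summable.tsum_mul_tsum hmom hsum s1, ← Summable.tsum_mul_tsum hsum hmom s2,
      ← Summable.tsum_mul_tsum hfsum hfsum s3, h1, h2, hftsum]
    ring
  have hf0 : f 0 = 0 := by simp [hf]
  have hfn : ∀ n, n ≠ 0 → f n = p n := by intro n hn; simp [hf, hn]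
  have hpw : ∀ ij : ℕ × ℕ, |(ij.1 : ℝ) - (ij.2 : ℝ)| * p ij.1 * p ij.2 ≤ b ij := by
    rintro ⟨i, j⟩
    simp only [hb]
    by_cases hi : i = 0
    · subst hi
      simp only [hf0, Nat.cast_zero, zero_sub, abs_neg, zero_mul, mul_zero, sub_zero]
      rw [abs_of_nonneg (Nat.cast_nonneg j)]
      nlinarith [hpos 0, hpos j, Nat.cast_nonneg (α := ℝ) j]
    · by_cases hj : j = 0
      · subst hj
        simp only [hf0, Nat.cast_zero, sub_zero, mul_zero, zero_mul]
        rw [abs_of_nonneg (Nat.cast_nonneg i)]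
        nlinarith [hpos 0, hpos i, Nat.cast_nonneg (α := ℝ) i]
      · rw [hfn i hi, hfn j hj]
        have h1i : (1 : ℝ) ≤ i := by exact_mod_cast Nat.one_le_iff_ne_zero.mpr hi
        have h1j : (1 : ℝ) ≤ j := by exact_mod_cast Nat.one_le_iff_ne_zero.mpr hj
        have habs : |(i : ℝ) - j| ≤ (i : ℝ) + j - 2 := by
          rw [abs_le]; constructor <;> linarith
        nlinarith [mul_nonneg (hpos i) (hpos j)]
  have hmain : ∑' ij : ℕ × ℕ, |(ij.1 : ℝ) - (ij.2 : ℝ)| * p ij.1 * p ij.2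
      ≤ 4 * p 0 - 2 * (p 0) ^ 2 := tb ▸ Summable.tsum_le_tsum hpw hG sb
  have hiter : ∑' i : ℕ, ∑' j : ℕ, |(i : ℝ) - (j : ℝ)| * p i * p j
      = ∑' ij : ℕ × ℕ, |(ij.1 : ℝ) - (ij.2 : ℝ)| * p ij.1 * p ij.2 := by
    refine (Summable.tsum_prod' hG fun i => ?_).symm
    refine Summable.of_nonneg_of_le
      (fun j => mul_nonneg (mul_nonneg (abs_nonneg _) (hpos i)) (hpos j))
      (fun j => ?_) (((hsum.mul_left ((i : ℝ) * p i)).add (hmom.mul_left (p i))))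
    have : |(i : ℝ) - j| ≤ (i : ℝ) + j := by
      rw [abs_le]; constructor <;> nlinarith [Nat.cast_nonneg (α := ℝ) i, Nat.cast_nonneg (α := ℝ) j]
    nlinarith [mul_nonneg (hpos i) (hpos j), Nat.cast_nonneg (α := ℝ) i, Nat.cast_nonneg (α := ℝ) j]
  constructor
  · rw [hiter]
    nlinarith [hpos 0, hp0]
  · nlinarith [hpos 0]
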